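/- Let U be an n-molecule in a regular directed complex and x ∈ U an n-dimensional element. Then there is a finite sequence x = x₀ → y₀ → x₁ → ... → xₘ → yₘ of elements of U such that each xᵢ is n-dimensional, each yᵢ is (n−1)-dimensional, yᵢ ∈ Δ^+ xᵢ ∩ Δ^− xᵢ₊₁ for i < m, and yₘ ∈ Δ^+ U. -/

import Mathlib

/-- An oriented graded poset: a finite graded poset together with an
orientation (edge-labelling of the Hasse diagram in `Bool`, `true` = `+`,
`false` = `-`).  `orient y x` is the label of the edge `y → x` when `x ⋖ y`. -/
structure OGP where
  carrier : Type
  [po : PartialOrder carrier]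
  [fin : Finite carrier]
  dim : carrier → ℕ
  graded : ∀ x y : carrier, x ⋖ y → dim y = dim x + 1
  min_dim : ∀ x : carrier, IsMin x → dim x = 0
  orient : carrier → carrier → Bool

attribute [instance] OGP.po OGP.fin

namespace OGP

variable (P : OGP)

/-- Downward closure of a subset. -/
def cl (U : Set P.carrier) : Set P.carrier := {x | ∃ y ∈ U, x ≤ y}

/-- A subset is closed if it is downward closed. -/
def IsClosed (U : Set P.carrier) : Prop := P.cl U ⊆ U

/-- `Δₙ^α U`: the `n`-dimensional elements of `U` all of whose covering
elements in `U` cover with sign `α`. -/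
def sb (n : ℕ) (α : Bool) (U : Set P.carrier) : Set P.carrier :=
  {x | x ∈ U ∧ P.dim x = n ∧ ∀ y ∈ U, x ⋖ y → P.orient y x = α}

/-- The boundary `∂ₙ^α U`. -/
def bd (n : ℕ) (α : Bool) (U : Set P.carrier) : Set P.carrier :=
  P.cl (P.sb n α U) ∪ {x | x ∈ U ∧ ∀ y ∈ U, x ≤ y → P.dim y ≤ n}

/-- Dimension of a subset (the maximum of the dimensions of its elements;
`0` if empty). -/
noncomputable def sdim (U : Set P.carrier) : ℕ := sSup (P.dim '' U)

end OGP

/-- A map of oriented graded posets: a function commuting with all boundary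
operators `∂ₙ^α` on closures of points. -/
def IsMap (P Q : OGP) (f : P.carrier → Q.carrier) : Prop :=
  ∀ (x : P.carrier) (n : ℕ) (α : Bool),
    Q.bd n α (Q.cl {f x}) = f '' (P.bd n α (P.cl {x}))

/-- Molecules in an oriented graded poset, defined inductively: atoms
(closed subsets with a greatest element), and pastings `U₁ ∪ U₂` of two
molecules properly contained in the union with
`U₁ ∩ U₂ = ∂ₖ^+ U₁ = ∂ₖ^- U₂`. -/
inductive IsMolecule (P : OGP) : Set P.carrier → Prop
  | atom : ∀ U : Set P.carrier, P.IsClosed U → (∃ x ∈ U, ∀ y ∈ U, y ≤ x) →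
      IsMolecule P U
  | paste : ∀ (U₁ U₂ : Set P.carrier) (k : ℕ),
      IsMolecule P U₁ → IsMolecule P U₂ →
      U₁ ∩ U₂ = P.bd k true U₁ → U₁ ∩ U₂ = P.bd k false U₂ →
      U₁ ≠ U₁ ∪ U₂ → U₂ ≠ U₁ ∪ U₂ →
      IsMolecule P (U₁ ∪ U₂)

/-- `∂^α x`: the boundary of the closure of a single element. -/
def OGP.bdx (P : OGP) (α : Bool) (x : P.carrier) : Set P.carrier :=
  P.bd (P.dim x - 1) α (P.cl {x})

/-- A directed complex: every `∂^α x` is a molecule, and globularity holds. -/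
def IsDirectedComplex (P : OGP) : Prop :=
  ∀ (x : P.carrier) (α : Bool),
    IsMolecule P (P.bdx α x) ∧
    (1 < P.dim x → ∀ β : Bool,
      P.bd (P.dim x - 2) α (P.bdx β x) = P.bd (P.dim x - 2) α (P.cl {x}))

/-- An `n`-molecule `U` has spherical boundary iff for all `k < n`,
`∂ₖ^+ U ∩ ∂ₖ^- U = ∂ₖ₋₁ U` (for `k = 0` the right-hand side is empty). -/
def HasSphericalBoundary (P : OGP) (n : ℕ) (U : Set P.carrier) : Prop :=
  (∀ k : ℕ, 0 < k → k < n →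
      P.bd k true U ∩ P.bd k false U = P.bd (k - 1) true U ∪ P.bd (k - 1) false U) ∧
  (0 < n → P.bd 0 true U ∩ P.bd 0 false U = ∅)

/-- A regular directed complex: a directed complex all of whose atoms have
spherical boundary. -/
def IsRegularDC (P : OGP) : Prop :=
  IsDirectedComplex P ∧ ∀ x : P.carrier, HasSphericalBoundary P (P.dim x) (P.cl {x})


section Aux

open OGP

variable {P : OGP}

lemma OGP.mem_cl {U : Set P.carrier} {z : P.carrier} :
    z ∈ P.cl U ↔ ∃ y ∈ U, z ≤ y := Iff.rfl

lemma OGP.mem_cl_singleton {t z : P.carrier} : z ∈ P.cl {t} ↔ z ≤ t := by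
  constructor
  · rintro ⟨y, rfl, h⟩; exact h
  · intro h; exact ⟨t, rfl, h⟩

lemma OGP.exists_covBy_le {x y : P.carrier} (h : x < y) : ∃ c, x ≤ c ∧ c ⋖ y := by
  classical
  have hS : ({c | x ≤ c ∧ c < y} : Set P.carrier).Finite := Set.toFinite _
  obtain ⟨c, hc, hmax⟩ := hS.exists_maximal ⟨x, le_refl x, h⟩
  refine ⟨c, hc.1, hc.2, fun {d} hcd hdy => ?_⟩
  exact absurd (hmax ⟨hc.1.trans hcd.le, hdy⟩ hcd.le) (fun hdc => lt_irrefl c (lt_of_lt_of_le hcd hdc))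

lemma OGP.dim_lt_of_lt : ∀ {y x : P.carrier}, x < y → P.dim x < P.dim y := by
  have : WellFoundedLT P.carrier := Finite.to_wellFoundedLT
  intro y
  induction y using WellFoundedLT.induction with
  | _ y ih =>
    intro x hxy
    obtain ⟨c, hxc, hcy⟩ := OGP.exists_covBy_le hxy
    have hd := P.graded c y hcy
    rcases eq_or_lt_of_le hxc with rfl | hlt
    · omega
    · have h1 := ih c hcy.lt hlt
      omega

lemma OGP.dim_le_of_le {x y : P.carrier} (h : x ≤ y) : P.dim x ≤ P.dim y := by
  rcases eq_or_lt_of_le h with rfl | h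
  · exact le_refl _
  · exact (OGP.dim_lt_of_lt h).le

lemma OGP.eq_of_le_of_dim_le {x y : P.carrier} (h : x ≤ y) (hd : P.dim y ≤ P.dim x) :
    x = y := by
  rcases eq_or_lt_of_le h with rfl | h
  · rfl
  · exact absurd (OGP.dim_lt_of_lt h) (by omega)

lemma OGP.covBy_of_lt_dim {x y : P.carrier} (h : x < y) (hd : P.dim y = P.dim x + 1) :
    x ⋖ y := by
  obtain ⟨c, hxc, hcy⟩ := OGP.exists_covBy_le h
  have hdc := P.graded c y hcy
  have : x = c := OGP.eq_of_le_of_dim_le hxc (by omega)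
  exact this ▸ hcy

lemma OGP.dim_le_of_mem_bd {V : Set P.carrier} {k : ℕ} {α : Bool} {z : P.carrier}
    (h : z ∈ P.bd k α V) : P.dim z ≤ k := by
  rcases h with ⟨w, ⟨_, hwd, _⟩, hzw⟩ | ⟨hz, hmax⟩
  · exact hwd ▸ OGP.dim_le_of_le hzw
  · exact hmax z hz (le_refl z)

lemma OGP.cover_orient_of_bd {V : Set P.carrier} {k : ℕ} {α : Bool} {y : P.carrier}
    (hy : y ∈ P.bd k α V) (hdy : P.dim y = k) :
    ∀ z ∈ V, y ⋖ z → P.orient z y = α := by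
  rcases hy with ⟨w, hw, hyw⟩ | ⟨_, hmax⟩
  · have : y = w := OGP.eq_of_le_of_dim_le hyw (by rw [hw.2.1, hdy])
    subst this
    exact hw.2.2
  · intro z hz hcov
    have := hmax z hz hcov.le
    have := P.graded y z hcov
    omega

lemma IsMolecule.closed {V : Set P.carrier} (h : IsMolecule P V) : P.IsClosed V := by
  induction h with
  | atom U hc _ => exact hc
  | paste U₁ U₂ k _ _ _ _ _ _ ih₁ ih₂ =>
    rintro z ⟨w, hw | hw, hzw⟩
    · exact Or.inl (ih₁ ⟨w, hw, hzw⟩)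
    · exact Or.inr (ih₂ ⟨w, hw, hzw⟩)

lemma IsMolecule.nonempty {V : Set P.carrier} (h : IsMolecule P V) : V.Nonempty := by
  induction h with
  | atom U _ hg => obtain ⟨x, hx, _⟩ := hg; exact ⟨x, hx⟩
  | paste U₁ U₂ k _ _ _ _ _ _ ih₁ ih₂ =>
    obtain ⟨a, ha⟩ := ih₁; exact ⟨a, Or.inl ha⟩

/-- The zig-zag path property. -/
def PathOK (P : OGP) (U : Set P.carrier) (n m : ℕ) (xs ys : ℕ → P.carrier) : Prop :=
  (∀ i ≤ m, xs i ∈ U ∧ P.dim (xs i) = n ∧ ys i ∈ U ∧ P.dim (ys i) = n - 1 ∧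
      ys i ⋖ xs i ∧ P.orient (xs i) (ys i) = true) ∧
  (∀ i < m, ys i ⋖ xs (i + 1) ∧ P.orient (xs (i + 1)) (ys i) = false)

lemma PathOK.mono {U U' : Set P.carrier} {n m : ℕ} {xs ys : ℕ → P.carrier}
    (hsub : U ⊆ U') (h : PathOK P U n m xs ys) : PathOK P U' n m xs ys := by
  refine ⟨fun i hi => ?_, h.2⟩
  obtain ⟨h1, h2, h3, h4, h5, h6⟩ := h.1 i hi
  exact ⟨hsub h1, h2, hsub h3, h4, h5, h6⟩

lemma PathOK.append {U : Set P.carrier} {n m₁ m₂ : ℕ} {xs₁ ys₁ xs₂ ys₂ : ℕ → P.carrier}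
    (h1 : PathOK P U n m₁ xs₁ ys₁) (h2 : PathOK P U n m₂ xs₂ ys₂)
    (hcov : ys₁ m₁ ⋖ xs₂ 0) (hor : P.orient (xs₂ 0) (ys₁ m₁) = false) :
    ∃ xs ys, xs 0 = xs₁ 0 ∧ PathOK P U n (m₁ + m₂ + 1) xs ys ∧
      ys (m₁ + m₂ + 1) = ys₂ m₂ := by
  classical
  refine ⟨fun i => if i ≤ m₁ then xs₁ i else xs₂ (i - m₁ - 1),
    fun i => if i ≤ m₁ then ys₁ i else ys₂ (i - m₁ - 1),
    by simp, ⟨?_, ?_⟩, ?_⟩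
  · intro i hi
    by_cases h : i ≤ m₁
    · simpa [h] using h1.1 i h
    · simpa [h] using h2.1 (i - m₁ - 1) (by omega)
  · intro i hi
    rcases lt_trichotomy i m₁ with h | heq | h
    · have h1le : i ≤ m₁ := h.le
      have h2le : i + 1 ≤ m₁ := h
      simpa [h1le, h2le] using h1.2 i h
    · subst heq
      have hne : ¬ i + 1 ≤ i := by omega
      have he0 : i + 1 - i - 1 = 0 := by omega
      simpa [hne, he0] using ⟨hcov, hor⟩
    · have hne : ¬ i ≤ m₁ := by omega
      have hne' : ¬ i + 1 ≤ m₁ := by omega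
      have he : i + 1 - m₁ - 1 = (i - m₁ - 1) + 1 := by omega
      simp only [if_neg hne, if_neg hne', he]
      exact h2.2 (i - m₁ - 1) (by omega)
  · have hne : ¬ m₁ + m₂ + 1 ≤ m₁ := by omega
    have he : m₁ + m₂ + 1 - m₁ - 1 = m₂ := by omega
    simp [hne, he]

lemma zig (P : OGP) (hP : IsRegularDC P) {V : Set P.carrier} (hV : IsMolecule P V) :
    ∀ n, 0 < n → (∀ y ∈ V, P.dim y ≤ n) → ∀ x ∈ V, P.dim x = n →
      ∃ m xs ys, xs 0 = x ∧ PathOK P V n m xs ys ∧ ys m ∈ P.sb (n - 1) true V := by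
  induction hV with
  | atom U hcl hgr =>
    intro n hn hd x hx hdx
    obtain ⟨t, htU, htop⟩ := hgr
    have hdt : P.dim t = n := le_antisymm (hd t htU) (hdx ▸ OGP.dim_le_of_le (htop x hx))
    have hxt : x = t := OGP.eq_of_le_of_dim_le (htop x hx) (by omega)
    have hUeq : U = P.cl {t} := by
      apply subset_antisymm
      · exact fun z hz => OGP.mem_cl_singleton.2 (htop z hz)
      · exact fun z hz => hcl ⟨t, htU, OGP.mem_cl_singleton.1 hz⟩
    obtain ⟨w, hw⟩ := (hP.1 t true).1.nonempty
    rw [OGP.bdx, hdt] at hw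
    rw [← hUeq] at hw
    rcases hw with ⟨y, ⟨hyU, hyd, hycov⟩, hwy⟩ | ⟨hwU, hwmax⟩
    · have hyt : y ≤ t := htop y hyU
      have hlt : y < t := lt_of_le_of_ne hyt (by intro h; rw [h, hdt] at hyd; omega)
      have hcov : y ⋖ t := OGP.covBy_of_lt_dim hlt (by omega)
      refine ⟨0, fun _ => x, fun _ => y, rfl, ⟨?_, ?_⟩, ⟨hyU, hyd, hycov⟩⟩
      · intro i _
        exact ⟨hx, hdx, hyU, hyd, hxt ▸ hcov, hxt ▸ hycov t htU hcov⟩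
      · intro i hi; omega
    · exfalso
      have := hwmax t htU (htop w hwU)
      omega
  | paste U₁ U₂ k h₁ h₂ hcap₁ hcap₂ hne₁ hne₂ ih₁ ih₂ =>
    intro n hn hd x hx hdx
    have hd₁ : ∀ y ∈ U₁, P.dim y ≤ n := fun y hy => hd y (Or.inl hy)
    have hd₂ : ∀ y ∈ U₂, P.dim y ≤ n := fun y hy => hd y (Or.inr hy)
    have hcl₁ := h₁.closed
    have hcl₂ := h₂.closed
    have hkn : k < n := by
      by_contra hcon
      push_neg at hcon
      have hsub : U₁ ⊆ U₂ := by
        intro z hz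
        have : z ∈ P.bd k true U₁ :=
          Or.inr ⟨hz, fun w hw _ => le_trans (hd₁ w hw) hcon⟩
        rw [← hcap₁] at this
        exact this.2
      exact hne₂ (Set.union_eq_self_of_subset_left hsub).symm
    -- Upgrade from the U₂ side.
    have upg₂ : ∀ y ∈ P.sb (n - 1) true U₂, y ∈ P.sb (n - 1) true (U₁ ∪ U₂) := by
      rintro y ⟨hyU, hyd, hycov⟩
      refine ⟨Or.inr hyU, hyd, ?_⟩
      rintro z (hz | hz) hcov
      · have hyU₁ : y ∈ U₁ := hcl₁ ⟨z, hz, hcov.le⟩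
        have hyi : y ∈ P.bd k true U₁ := hcap₁ ▸ ⟨hyU₁, hyU⟩
        have hky : P.dim y ≤ k := OGP.dim_le_of_mem_bd hyi
        have hkeq : k = n - 1 := by omega
        exact OGP.cover_orient_of_bd (hkeq ▸ hyi) hyd z hz hcov
      · exact hycov z hz hcov
    rcases hx with hx₁ | hx₂
    · -- x ∈ U₁
      obtain ⟨m₁, xs₁, ys₁, hxs0, hpath₁, hend₁⟩ := ih₁ n hn hd₁ x hx₁ hdx
      obtain ⟨hyU₁, hyd, hycov₁⟩ := hend₁
      by_cases hcase : ∀ z ∈ U₁ ∪ U₂, ys₁ m₁ ⋖ z → P.orient z (ys₁ m₁) = true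
      · exact ⟨m₁, xs₁, ys₁, hxs0, hpath₁.mono Set.subset_union_left,
          Or.inl hyU₁, hyd, hcase⟩
      · push_neg at hcase
        obtain ⟨z, hzU, hzcov, hzor⟩ := hcase
        have hz₂ : z ∈ U₂ := by
          rcases hzU with hz | hz
          · exact absurd (hycov₁ z hz hzcov) hzor
          · exact hz
        have hy₂ : ys₁ m₁ ∈ U₂ := hcl₂ ⟨z, hz₂, hzcov.le⟩
        have hyi : ys₁ m₁ ∈ P.bd k false U₂ := hcap₂ ▸ ⟨hyU₁, hy₂⟩
        have hky : P.dim (ys₁ m₁) ≤ k := OGP.dim_le_of_mem_bd hyi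
        have hkeq : k = n - 1 := by omega
        have horz : P.orient z (ys₁ m₁) = false :=
          OGP.cover_orient_of_bd (hkeq ▸ hyi) hyd z hz₂ hzcov
        have hdz : P.dim z = n := by
          have := P.graded (ys₁ m₁) z hzcov
          omega
        obtain ⟨m₂, xs₂, ys₂, hxs20, hpath₂, hend₂⟩ := ih₂ n hn hd₂ z hz₂ hdz
        obtain ⟨xs, ys, h0, hp, hlast⟩ :=
          PathOK.append (hpath₁.mono Set.subset_union_left)
            (hpath₂.mono Set.subset_union_right)
            (hxs20 ▸ hzcov) (hxs20 ▸ horz)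
        exact ⟨m₁ + m₂ + 1, xs, ys, h0.trans hxs0, hp, hlast ▸ upg₂ _ hend₂⟩
    · -- x ∈ U₂
      obtain ⟨m₂, xs₂, ys₂, hxs0, hpath₂, hend₂⟩ := ih₂ n hn hd₂ x hx₂ hdx
      exact ⟨m₂, xs₂, ys₂, hxs0, hpath₂.mono Set.subset_union_right, upg₂ _ hend₂⟩

end Aux

/-- in a regular directed complex, from every `n`-dimensional
element of an `n`-molecule there is a zig-zag path through output/input
faces ending in `Δ⁺U`. -/
theorem stmt8 (P : OGP) (hP : IsRegularDC P) (U : Set P.carrier) (n : ℕ) (hn : 0 < n)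
    (hU : IsMolecule P U) (hd : ∀ y ∈ U, P.dim y ≤ n) (he : ∃ y ∈ U, P.dim y = n)
    (x : P.carrier) (hx : x ∈ U) (hdx : P.dim x = n) :
    ∃ (m : ℕ) (xs ys : ℕ → P.carrier),
      xs 0 = x ∧
      (∀ i ≤ m, xs i ∈ U ∧ P.dim (xs i) = n ∧ ys i ∈ U ∧ P.dim (ys i) = n - 1 ∧
        ys i ⋖ xs i ∧ P.orient (xs i) (ys i) = true) ∧
      (∀ i < m, ys i ⋖ xs (i + 1) ∧ P.orient (xs (i + 1)) (ys i) = false) ∧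
      ys m ∈ P.sb (n - 1) true U := by
  obtain ⟨m, xs, ys, h0, ⟨hA, hB⟩, hend⟩ := zig P hP hU n hn hd x hx hdx
  exact ⟨m, xs, ys, h0, hA, hB, hend⟩
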